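/- Let X be a set, λ : ℕ → [0, ∞), φ : ℕ → X → ℝ, and z, w ∈ X, t > 0, d ≥ 1, A > 0, C_1 > 0, C_2 > 0. For x, y ∈ X define K_s(x, y) = ∑_j φ_j(x) φ_j(y) e^{−λ_j s} whenever this series converges absolutely, and assume all the series below converge absolutely. Suppose: K_{t/2}(z, z) ≤ C_2 (t/2)^{−d/2}, K_{t/2}(w, w) ≤ C_2 (t/2)^{−d/2}, K_t(z, w) ≥ C_1 t^{−d/2}, and e^{−A/2} 2^{d/2} C_2 ≤ C_1 / 2. Then the truncated sum over low frequencies satisfies (1/2) K_t(z, w) ≤ ∑_{j : λ_j ≤ A/t} φ_j(z) φ_j(w) e^{−λ_j t} ≤ (3/2) K_t(z, w). -/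

import Mathlib

/-- Truncation lemma, part (i): under explicit diagonal heat-kernel bounds at time `t/2`,
a lower bound on `K_t(z,w)` and the smallness condition `e^{-A/2} 2^{d/2} C₂ ≤ C₁/2`,
the spectral expansion truncated to eigenvalues `λ_j ≤ A/t` is within a factor
`[1/2, 3/2]` of the full heat kernel `K_t(z,w)`. -/
theorem truncated_heat_kernel_comparable {X : Type*} (lam : ℕ → ℝ) (hlam : ∀ j, 0 ≤ lam j)
    (φ : ℕ → X → ℝ) (z w : X) (t : ℝ) (ht : 0 < t) (d : ℕ) (hd : 1 ≤ d)
    (A C₁ C₂ : ℝ) (hA : 0 < A) (hC₁ : 0 < C₁) (hC₂ : 0 < C₂)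
    (habs : Summable fun j => |φ j z * φ j w * Real.exp (-lam j * t)|)
    (hz : Summable fun j => φ j z ^ 2 * Real.exp (-lam j * (t / 2)))
    (hw : Summable fun j => φ j w ^ 2 * Real.exp (-lam j * (t / 2)))
    (hKz : (∑' j, φ j z ^ 2 * Real.exp (-lam j * (t / 2))) ≤ C₂ * (t / 2) ^ (-(d : ℝ) / 2))
    (hKw : (∑' j, φ j w ^ 2 * Real.exp (-lam j * (t / 2))) ≤ C₂ * (t / 2) ^ (-(d : ℝ) / 2))
    (hKzw : C₁ * t ^ (-(d : ℝ) / 2) ≤ ∑' j, φ j z * φ j w * Real.exp (-lam j * t))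
    (hAC : Real.exp (-A / 2) * 2 ^ ((d : ℝ) / 2) * C₂ ≤ C₁ / 2) :
    (1 / 2) * (∑' j, φ j z * φ j w * Real.exp (-lam j * t)) ≤
        (∑' j, if lam j ≤ A / t then φ j z * φ j w * Real.exp (-lam j * t) else 0) ∧
      (∑' j, if lam j ≤ A / t then φ j z * φ j w * Real.exp (-lam j * t) else 0) ≤
        (3 / 2) * (∑' j, φ j z * φ j w * Real.exp (-lam j * t)) := by
  classical
  set f : ℕ → ℝ := fun j => φ j z * φ j w * Real.exp (-lam j * t) with hf
  have hsf : Summable f := habs.of_abs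
  -- truncated and tail parts
  have htr : Summable (fun j => if lam j ≤ A / t then f j else 0) := by
    apply Summable.of_abs
    apply habs.of_nonneg_of_le (fun j => abs_nonneg _)
    intro j
    by_cases h : lam j ≤ A / t
    · rw [if_pos h]
    · rw [if_neg h, abs_zero]; exact abs_nonneg _
  have htail : Summable (fun j => if lam j ≤ A / t then 0 else f j) := by
    apply Summable.of_abs
    apply habs.of_nonneg_of_le (fun j => abs_nonneg _)
    intro j
    by_cases h : lam j ≤ A / t
    · rw [if_pos h, abs_zero]; exact abs_nonneg _
    · rw [if_neg h]
  have hsplit : (∑' j, f j) =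
      (∑' j, if lam j ≤ A / t then f j else 0) + (∑' j, if lam j ≤ A / t then 0 else f j) := by
    rw [← Summable.tsum_add htr htail]
    congr 1
    funext j
    by_cases h : lam j ≤ A / t <;> simp [h]
  -- pointwise bound on the tail terms
  have hRS : Summable (fun j => Real.exp (-A / 2) *
      ((φ j z ^ 2 * Real.exp (-lam j * (t / 2)) + φ j w ^ 2 * Real.exp (-lam j * (t / 2))) / 2)) :=
    ((hz.add hw).div_const 2).mul_left _
  have hptw : ∀ j, |if lam j ≤ A / t then (0 : ℝ) else f j| ≤ Real.exp (-A / 2) *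
      ((φ j z ^ 2 * Real.exp (-lam j * (t / 2)) + φ j w ^ 2 * Real.exp (-lam j * (t / 2))) / 2) := by
    intro j
    by_cases h : lam j ≤ A / t
    · simp only [h, if_true, abs_zero]
      positivity
    · simp only [h, if_false]
      have hAt : A < lam j * t := (div_lt_iff₀ ht).mp (lt_of_not_ge h)
      have he : Real.exp (-lam j * (t / 2)) ≤ Real.exp (-A / 2) := by
        apply Real.exp_le_exp.mpr; linarith
      have hab : |φ j z * φ j w| ≤ (φ j z ^ 2 + φ j w ^ 2) / 2 := by
        rw [abs_mul]
        nlinarith [sq_nonneg (|φ j z| - |φ j w|), sq_abs (φ j z), sq_abs (φ j w),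
          abs_nonneg (φ j z), abs_nonneg (φ j w)]
      have hsplit_exp : Real.exp (-lam j * t) =
          Real.exp (-lam j * (t / 2)) * Real.exp (-lam j * (t / 2)) := by
        rw [← Real.exp_add]; ring_nf
      calc |f j| = |φ j z * φ j w| * (Real.exp (-lam j * (t / 2)) * Real.exp (-lam j * (t / 2))) := by
            rw [hf]
            rw [abs_mul, abs_of_pos (Real.exp_pos _), hsplit_exp]
        _ ≤ ((φ j z ^ 2 + φ j w ^ 2) / 2) * (Real.exp (-lam j * (t / 2)) * Real.exp (-A / 2)) := by
            apply mul_le_mul hab _ (by positivity) (by positivity)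
            exact mul_le_mul_of_nonneg_left he (Real.exp_pos _).le
        _ = Real.exp (-A / 2) *
            ((φ j z ^ 2 * Real.exp (-lam j * (t / 2)) + φ j w ^ 2 * Real.exp (-lam j * (t / 2))) / 2) := by
            ring
  -- bound the tail sum
  have habs_tail : Summable (fun j => |if lam j ≤ A / t then (0 : ℝ) else f j|) :=
    hRS.of_nonneg_of_le (fun j => abs_nonneg _) hptw
  have hT1 : |∑' j, if lam j ≤ A / t then (0 : ℝ) else f j| ≤
      ∑' j, Real.exp (-A / 2) *
      ((φ j z ^ 2 * Real.exp (-lam j * (t / 2)) + φ j w ^ 2 * Real.exp (-lam j * (t / 2))) / 2) := by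
    calc |∑' j, if lam j ≤ A / t then (0 : ℝ) else f j|
        ≤ ∑' j, |if lam j ≤ A / t then (0 : ℝ) else f j| := by
          simpa using norm_tsum_le_tsum_norm (f := fun j => if lam j ≤ A / t then (0 : ℝ) else f j)
            (by simpa using habs_tail)
      _ ≤ _ := Summable.tsum_le_tsum hptw habs_tail hRS
  have hT2 : (∑' j, Real.exp (-A / 2) *
      ((φ j z ^ 2 * Real.exp (-lam j * (t / 2)) + φ j w ^ 2 * Real.exp (-lam j * (t / 2))) / 2))
      = Real.exp (-A / 2) * (((∑' j, φ j z ^ 2 * Real.exp (-lam j * (t / 2))) +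
        (∑' j, φ j w ^ 2 * Real.exp (-lam j * (t / 2)))) / 2) := by
    rw [tsum_mul_left, tsum_div_const, Summable.tsum_add hz hw]
  -- rewrite (t/2)^(-d/2)
  have hpow : (t / 2 : ℝ) ^ (-(d : ℝ) / 2) = 2 ^ ((d : ℝ) / 2) * t ^ (-(d : ℝ) / 2) := by
    rw [Real.div_rpow ht.le (by norm_num), div_eq_mul_inv,
      ← Real.rpow_neg (by norm_num : (0:ℝ) ≤ 2), neg_div, neg_neg, mul_comm]
  have htpos : (0 : ℝ) < t ^ (-(d : ℝ) / 2) := Real.rpow_pos_of_pos ht _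
  have hT3 : |∑' j, if lam j ≤ A / t then (0 : ℝ) else f j| ≤ (1 / 2) * ∑' j, f j := by
    have h4 : Real.exp (-A / 2) * (((∑' j, φ j z ^ 2 * Real.exp (-lam j * (t / 2))) +
        (∑' j, φ j w ^ 2 * Real.exp (-lam j * (t / 2)))) / 2)
        ≤ Real.exp (-A / 2) * (C₂ * (t / 2) ^ (-(d : ℝ) / 2)) := by
      apply mul_le_mul_of_nonneg_left _ (Real.exp_pos _).le
      linarith
    have h5 : Real.exp (-A / 2) * (C₂ * (t / 2) ^ (-(d : ℝ) / 2)) ≤ (C₁ / 2) * t ^ (-(d : ℝ) / 2) := by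
      rw [hpow]
      calc Real.exp (-A / 2) * (C₂ * (2 ^ ((d : ℝ) / 2) * t ^ (-(d : ℝ) / 2)))
          = (Real.exp (-A / 2) * 2 ^ ((d : ℝ) / 2) * C₂) * t ^ (-(d : ℝ) / 2) := by ring
        _ ≤ (C₁ / 2) * t ^ (-(d : ℝ) / 2) := mul_le_mul_of_nonneg_right hAC htpos.le
    have h6 : (C₁ / 2) * t ^ (-(d : ℝ) / 2) ≤ (1 / 2) * ∑' j, f j := by
      rw [hf]; nlinarith
    calc |∑' j, if lam j ≤ A / t then (0 : ℝ) else f j| ≤ _ := hT1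
      _ = _ := hT2
      _ ≤ _ := h4
      _ ≤ _ := h5
      _ ≤ _ := h6
  rw [abs_le] at hT3
  constructor <;> [skip; skip] <;>
  · show _ ≤ _
    have := hsplit
    simp only [hf] at *
    linarith
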